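/- Let A, B ∈ L(X,Y) be bounded linear operators with A injective and with closed range, so that A*A is invertible in L(X,X) and the Moore–Penrose pseudoinverse of A is A† = (A*A)⁻¹A*. If ‖(B − A)A†‖ < 1, then B is injective, the range of B is closed (equivalently B*B is invertible, so B† = (B*B)⁻¹B* is well-defined), and ‖B†‖ ≤ ‖A†‖ / (1 − ‖(B − A)A†‖). -/

import Mathlib

open ContinuousLinearMap

set_option maxHeartbeats 1000000 in
/-- Perturbation bound for the Moore–Penrose pseudoinverse: if `A` is injective with
closed range (so that `A*A` is invertible, with inverse `S`, and `A† = (A*A)⁻¹A*`)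
and `‖(B − A)A†‖ < 1`, then `B` is injective with closed range, `B*B` is invertible
(with inverse `T`, so `B† = (B*B)⁻¹B*` is well-defined) and
`‖B†‖ ≤ ‖A†‖ / (1 − ‖(B − A)A†‖)`. -/
theorem stmt_4 {X Y : Type*} [NormedAddCommGroup X] [InnerProductSpace ℝ X] [CompleteSpace X]
    [NormedAddCommGroup Y] [InnerProductSpace ℝ Y] [CompleteSpace Y]
    (A B : X →L[ℝ] Y)
    (hAinj : Function.Injective A) (hAcl : IsClosed (Set.range A))
    (S : X →L[ℝ] X)
    (hS1 : S ∘L (adjoint A ∘L A) = 1) (hS2 : (adjoint A ∘L A) ∘L S = 1)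
    (Adag : Y →L[ℝ] X) (hAdag : Adag = S ∘L adjoint A)
    (hBA : ‖(B - A) ∘L Adag‖ < 1) :
    Function.Injective B ∧ IsClosed (Set.range B) ∧
    ∃ T : X →L[ℝ] X, T ∘L (adjoint B ∘L B) = 1 ∧ (adjoint B ∘L B) ∘L T = 1 ∧
      ‖T ∘L adjoint B‖ ≤ ‖Adag‖ / (1 - ‖(B - A) ∘L Adag‖) := by
  set E := (B - A) ∘L Adag with hE
  have hE1 : (0:ℝ) < 1 - ‖E‖ := by linarith
  have hAdagA : ∀ x, Adag (A x) = x := by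
    intro x
    have h := congrArg (fun f : X →L[ℝ] X => f x) hS1
    simpa [hAdag] using h
  rcases subsingleton_or_nontrivial X with hX | hX
  · refine ⟨fun a b _ => Subsingleton.elim a b, ?_, 0, ?_, ?_, ?_⟩
    · have hr : Set.range B = {0} := by
        ext y
        constructor
        · rintro ⟨x, rfl⟩
          simp [Subsingleton.elim x 0]
        · rintro rfl
          exact ⟨0, by simp⟩
      rw [hr]; exact isClosed_singleton
    · ext x; exact Subsingleton.elim _ _
    · ext x; exact Subsingleton.elim _ _
    · have hA0 : Adag = 0 := by ext y; exact Subsingleton.elim _ _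
      simp [hA0]
  · have hc : (0:ℝ) < ‖Adag‖ := by
      obtain ⟨x, hx⟩ := exists_ne (0:X)
      refine norm_pos_iff.mpr fun h0 => hx ?_
      rw [← hAdagA x, h0]; simp
    have hBAx : ∀ x, B x - A x = E (A x) := by
      intro x
      simp [hE, hAdagA x]
    -- lower bound
    have hlow : ∀ x, (1 - ‖E‖) / ‖Adag‖ * ‖x‖ ≤ ‖B x‖ := by
      intro x
      have h1 : ‖x‖ ≤ ‖Adag‖ * ‖A x‖ := by
        calc ‖x‖ = ‖Adag (A x)‖ := by rw [hAdagA x]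
          _ ≤ ‖Adag‖ * ‖A x‖ := Adag.le_opNorm _
      have h2 : ‖B x - A x‖ ≤ ‖E‖ * ‖A x‖ := by rw [hBAx x]; exact E.le_opNorm _
      have h4 : ‖A x‖ - ‖B x‖ ≤ ‖B x - A x‖ := by
        rw [norm_sub_rev]; exact norm_sub_norm_le _ _
      have h5 : (1 - ‖E‖) * ‖A x‖ ≤ ‖B x‖ := by nlinarith
      rw [div_mul_eq_mul_div, div_le_iff₀ hc]
      nlinarith [norm_nonneg (A x), norm_nonneg (B x)]
    have hK : ∀ x, ‖x‖ ≤ ‖Adag‖ / (1 - ‖E‖) * ‖B x‖ := by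
      intro x
      have h := hlow x
      rw [div_mul_eq_mul_div, div_le_iff₀ hc] at h
      rw [div_mul_eq_mul_div, le_div_iff₀ hE1]
      nlinarith
    have hBanti : AntilipschitzWith ⟨‖Adag‖ / (1 - ‖E‖),
        div_nonneg (norm_nonneg _) hE1.le⟩ B :=
      AddMonoidHomClass.antilipschitz_of_bound B hK
    refine ⟨hBanti.injective, hBanti.isClosed_range B.uniformContinuous, ?_⟩
    -- coercivity of the bilinear form (u, v) ↦ ⟪B*B u, v⟫
    set bilin : X →L[ℝ] X →L[ℝ] ℝ := (innerSL ℝ).comp (adjoint B ∘L B) with hbilin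
    have hbilin_apply : ∀ u v : X, bilin u v = inner ℝ ((adjoint B ∘L B) u) v := by
      intro u v
      simp only [hbilin, ContinuousLinearMap.comp_apply, innerSL_apply_apply]
    have coercive : IsCoercive bilin := by
      refine ⟨((1 - ‖E‖) / ‖Adag‖) ^ 2, by positivity, fun u => ?_⟩
      have h1 : bilin u u = ‖B u‖ * ‖B u‖ := by
        rw [hbilin_apply]
        simp only [comp_apply]
        rw [adjoint_inner_left, real_inner_self_eq_norm_mul_norm]
      rw [h1]
      have h2 := hlow u
      have h3 := mul_le_mul h2 h2 (by positivity) (norm_nonneg (B u))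
      calc ((1 - ‖E‖) / ‖Adag‖) ^ 2 * ‖u‖ * ‖u‖
          = ((1 - ‖E‖) / ‖Adag‖ * ‖u‖) * ((1 - ‖E‖) / ‖Adag‖ * ‖u‖) := by ring
        _ ≤ ‖B u‖ * ‖B u‖ := h3
    set e := coercive.continuousLinearEquivOfBilin with he_def
    have he : ∀ x, e x = adjoint B (B x) := by
      intro x
      apply ext_inner_right ℝ
      intro w
      rw [coercive.continuousLinearEquivOfBilin_apply]
      exact hbilin_apply x w
    refine ⟨(e.symm : X →L[ℝ] X), ?_, ?_, ?_⟩
    · ext x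
      simp only [comp_apply, ContinuousLinearEquiv.coe_coe, one_apply]
      rw [← he x]
      exact e.symm_apply_apply x
    · ext x
      simp only [comp_apply, ContinuousLinearEquiv.coe_coe, one_apply]
      rw [← he (e.symm x)]
      exact e.apply_symm_apply x
    · refine opNorm_le_bound _ (div_nonneg (norm_nonneg _) hE1.le) fun y => ?_
      set x := e.symm (adjoint B y) with hx_def
      have hxx : adjoint B (B x) = adjoint B y := by
        rw [← he x]
        exact e.apply_symm_apply _
      have hBx : ‖B x‖ ≤ ‖y‖ := by
        have h7 : ‖B x‖ * ‖B x‖ = inner ℝ y (B x) := by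
          rw [← real_inner_self_eq_norm_mul_norm, ← adjoint_inner_left]
          have : adjoint B (B x) = adjoint B y := hxx
          rw [this, adjoint_inner_left]
        have h8 : (inner ℝ y (B x) : ℝ) ≤ ‖y‖ * ‖B x‖ := real_inner_le_norm _ _
        rcases eq_or_lt_of_le (norm_nonneg (B x)) with h9 | h9
        · rw [← h9]; exact norm_nonneg y
        · nlinarith
      have hxle : ‖x‖ ≤ ‖Adag‖ / (1 - ‖E‖) * ‖B x‖ := hK x
      calc ‖((e.symm : X →L[ℝ] X) ∘L adjoint B) y‖ = ‖x‖ := rfl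
        _ ≤ ‖Adag‖ / (1 - ‖E‖) * ‖B x‖ := hxle
        _ ≤ ‖Adag‖ / (1 - ‖E‖) * ‖y‖ :=
            mul_le_mul_of_nonneg_left hBx (div_nonneg (norm_nonneg _) hE1.le)
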